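/- Local average direct effect under one-sided noncompliance: under Assumptions 1, 2 and 4, if P[C_i] > 0 then E[Y(1,0) − Y(0,0) | C_i] = (E[Y | Z_i=1, Z_j=0] − E[Y | Z_i=0, Z_j=0]) / E[D_i | Z_i=1, Z_j=0]. -/

import Mathlib

open MeasureTheory ProbabilityTheory

noncomputable def bInd (b : Bool) : ℝ := if b then 1 else 0

theorem stmt_9
    {Ω : Type*} [MeasurableSpace Ω] (P : Measure Ω) [IsProbabilityMeasure P]
    (Y : Bool → Bool → Ω → ℝ) (Di Dj : Bool → Bool → Ω → Bool)
    (Zi Zj : Ω → Bool)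
    (hYmeas : ∀ d d', Measurable (Y d d'))
    (hYint : ∀ d d', Integrable (Y d d') P)
    (hDimeas : ∀ z z', Measurable (Di z z'))
    (hDjmeas : ∀ z z', Measurable (Dj z z'))
    (hZi : Measurable Zi) (hZj : Measurable Zj)
    (hpos : ∀ z z', 0 < P ({x | Zi x = z} ∩ {x | Zj x = z'}))
    (hIV : IndepFun
      (fun ω => ((fun d d' => Y d d' ω),
                 (fun z z' => Di z z' ω),
                 (fun z z' => Dj z z' ω)))
      (fun ω => (Zi ω, Zj ω)) P)
    (hmono : ∀ᵐ ω ∂P,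
      (Di false false ω ≤ Di false true ω ∧ Di false true ω ≤ Di true false ω ∧
        Di true false ω ≤ Di true true ω) ∧
      (Dj false false ω ≤ Dj false true ω ∧ Dj false true ω ≤ Dj true false ω ∧
        Dj true false ω ≤ Dj true true ω))
    (hosn : ∀ᵐ ω ∂P,
      Di false false ω = false ∧ Di false true ω = false ∧
      Dj false false ω = false ∧ Dj false true ω = false)
    (hC : 0 < P ({x | Di true false x = true ∧ Di false true x = false}))
    :
    (∫ ω, (Y true false ω - Y false false ω) ∂(P[|{x | Di true false x = true ∧ Di false true x = false}]))
    = ((∫ ω, (Y (Di (Zi ω) (Zj ω) ω) (Dj (Zj ω) (Zi ω) ω) ω) ∂(P[|({x | Zi x = true} ∩ {x | Zj x = false})])) - (∫ ω, (Y (Di (Zi ω) (Zj ω) ω) (Dj (Zj ω) (Zi ω) ω) ω) ∂(P[|({x | Zi x = false} ∩ {x | Zj x = false})])))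
      / (∫ ω, bInd (Di (Zi ω) (Zj ω) ω) ∂(P[|({x | Zi x = true} ∩ {x | Zj x = false})])) := by
  classical
  -- notation
  set T := ((Bool → Bool → ℝ) × (Bool → Bool → Bool) × (Bool → Bool → Bool)) with hT
  set W : Ω → T :=
    fun ω => ((fun d d' => Y d d' ω), (fun z z' => Di z z' ω), (fun z z' => Dj z z' ω)) with hWdef
  have hWmeas : Measurable W := by
    refine Measurable.prod ?_ (Measurable.prod ?_ ?_)
    · exact measurable_pi_lambda _ fun d => measurable_pi_lambda _ fun d' => hYmeas d d'
    · exact measurable_pi_lambda _ fun z => measurable_pi_lambda _ fun z' => hDimeas z z'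
    · exact measurable_pi_lambda _ fun z => measurable_pi_lambda _ fun z' => hDjmeas z z'
  set Z : Ω → Bool × Bool := fun ω => (Zi ω, Zj ω) with hZdef
  have hZmeas : Measurable Z := hZi.prodMk hZj
  have hseq : ∀ z z' : Bool, ({x | Zi x = z} ∩ {x | Zj x = z'}) = Z ⁻¹' {(z, z')} := by
    intro z z'; ext ω; simp [hZdef, Prod.ext_iff, Set.mem_inter_iff]
  have hsmeas : ∀ z z' : Bool, MeasurableSet ({x | Zi x = z} ∩ {x | Zj x = z'}) := fun z z' =>
    (hZi (measurableSet_singleton z)).inter (hZj (measurableSet_singleton z'))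
  -- factorization from independence
  have factor : ∀ (φ : T → ℝ), Measurable φ → ∀ z z' : Bool,
      ∫ ω in ({x | Zi x = z} ∩ {x | Zj x = z'}), φ (W ω) ∂P
        = (∫ ω, φ (W ω) ∂P) * (P ({x | Zi x = z} ∩ {x | Zj x = z'})).toReal := by
    intro φ hφ z z'
    have hψ : Measurable (fun p : Bool × Bool => if p = (z, z') then (1:ℝ) else 0) :=
      measurable_of_countable _
    have hind : IndepFun (fun ω => φ (W ω)) (fun ω => if Z ω = (z, z') then (1:ℝ) else 0) P :=
      hIV.comp hφ hψ
    have h1 : ∫ ω, ((fun ω => φ (W ω)) * fun ω => if Z ω = (z, z') then (1:ℝ) else 0) ω ∂P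
        = (∫ ω, φ (W ω) ∂P) * ∫ ω, (if Z ω = (z, z') then (1:ℝ) else 0) ∂P :=
      hind.integral_mul_eq_mul_integral (hφ.comp hWmeas).aestronglyMeasurable
        (hψ.comp hZmeas).aestronglyMeasurable
    have hset : MeasurableSet (Z ⁻¹' {(z, z')}) := hZmeas (measurableSet_singleton _)
    rw [hseq z z', ← integral_indicator hset]
    have e1 : (Z ⁻¹' {(z, z')}).indicator (fun ω => φ (W ω))
        = ((fun ω => φ (W ω)) * fun ω => if Z ω = (z, z') then (1:ℝ) else 0) := by
      funext ω; by_cases h : Z ω = (z, z') <;> simp [Set.indicator, h]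
    have e2 : (fun ω => if Z ω = (z, z') then (1:ℝ) else 0)
        = (Z ⁻¹' {(z, z')}).indicator 1 := by
      funext ω; by_cases h : Z ω = (z, z') <;> simp [Set.indicator, h]
    rw [e1, h1, e2, integral_indicator_one hset, measureReal_def]
  -- the complier set
  set C' : Set Ω := Di true false ⁻¹' {true} with hC'def
  have mC' : MeasurableSet C' := hDimeas true false (measurableSet_singleton true)
  -- measurable φ's
  have m21 : Measurable (fun w : T => w.2.1 true false) :=
    (measurable_pi_apply false).comp ((measurable_pi_apply true).comp
      (measurable_fst.comp measurable_snd))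
  have mY : ∀ d d' : Bool, Measurable (fun w : T => w.1 d d') := fun d d' =>
    (measurable_pi_apply d').comp ((measurable_pi_apply d).comp measurable_fst)
  have mcond : MeasurableSet {w : T | w.2.1 true false = true} :=
    m21 (measurableSet_singleton true)
  set φ10 : T → ℝ := fun w => if w.2.1 true false = true then w.1 true false else w.1 false false
    with hφ10
  have hφ10m : Measurable φ10 := Measurable.ite mcond (mY true false) (mY false false)
  set φ00 : T → ℝ := fun w => w.1 false false with hφ00
  set φD : T → ℝ := fun w => if w.2.1 true false = true then (1:ℝ) else 0 with hφD
  have hφDm : Measurable φD := Measurable.ite mcond measurable_const measurable_const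
  -- cond-integral reduction
  have condint : ∀ (s : Set Ω) (f : Ω → ℝ),
      ∫ ω, f ω ∂(P[|s]) = (P s).toReal⁻¹ * ∫ ω in s, f ω ∂P := by
    intro s f
    rw [ProbabilityTheory.cond, integral_smul_measure, ENNReal.toReal_inv, smul_eq_mul]
  have htop : ∀ s : Set Ω, P s ≠ ⊤ := fun s => measure_ne_top P s
  have hposR : ∀ z z' : Bool, (0:ℝ) < (P ({x | Zi x = z} ∩ {x | Zj x = z'})).toReal :=
    fun z z' => ENNReal.toReal_pos (hpos z z').ne' (htop _)
  -- Term 1 : E[Y | Z = (1,0)] = E[φ10 ∘ W]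
  have term1 : ∫ ω, (Y (Di (Zi ω) (Zj ω) ω) (Dj (Zj ω) (Zi ω) ω) ω)
        ∂(P[|({x | Zi x = true} ∩ {x | Zj x = false})]) = ∫ ω, φ10 (W ω) ∂P := by
    rw [condint]
    have hae : ∀ᵐ ω ∂(P.restrict ({x | Zi x = true} ∩ {x | Zj x = false})),
        Y (Di (Zi ω) (Zj ω) ω) (Dj (Zj ω) (Zi ω) ω) ω = φ10 (W ω) := by
      filter_upwards [ae_restrict_mem (hsmeas true false), ae_restrict_of_ae hosn] with ω hω h2
      obtain ⟨h1, h2'⟩ := hω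
      simp only [Set.mem_setOf_eq] at h1 h2'
      rw [h1, h2', h2.2.2.2]
      simp only [hφ10, hWdef]
      cases h : Di true false ω <;> simp [h]
    rw [integral_congr_ae hae, factor φ10 hφ10m true false]
    rw [mul_comm (∫ ω, φ10 (W ω) ∂P), ← mul_assoc, inv_mul_cancel₀ (hposR true false).ne', one_mul]
  -- Term 2 : E[Y | Z = (0,0)] = E[Y(0,0)]
  have term2 : ∫ ω, (Y (Di (Zi ω) (Zj ω) ω) (Dj (Zj ω) (Zi ω) ω) ω)
        ∂(P[|({x | Zi x = false} ∩ {x | Zj x = false})]) = ∫ ω, Y false false ω ∂P := by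
    rw [condint]
    have hae : ∀ᵐ ω ∂(P.restrict ({x | Zi x = false} ∩ {x | Zj x = false})),
        Y (Di (Zi ω) (Zj ω) ω) (Dj (Zj ω) (Zi ω) ω) ω = φ00 (W ω) := by
      filter_upwards [ae_restrict_mem (hsmeas false false), ae_restrict_of_ae hosn] with ω hω h2
      obtain ⟨h1, h2'⟩ := hω
      simp only [Set.mem_setOf_eq] at h1 h2'
      rw [h1, h2', h2.1, h2.2.2.1]
    have hφ00m : Measurable φ00 := mY false false
    rw [integral_congr_ae hae, factor φ00 hφ00m false false]
    rw [mul_comm (∫ ω, φ00 (W ω) ∂P), ← mul_assoc, inv_mul_cancel₀ (hposR false false).ne', one_mul]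
  -- Denominator : E[D | Z = (1,0)] = P(C')
  have term3 : ∫ ω, bInd (Di (Zi ω) (Zj ω) ω)
        ∂(P[|({x | Zi x = true} ∩ {x | Zj x = false})]) = (P C').toReal := by
    rw [condint]
    have hae : ∀ᵐ ω ∂(P.restrict ({x | Zi x = true} ∩ {x | Zj x = false})),
        bInd (Di (Zi ω) (Zj ω) ω) = φD (W ω) := by
      filter_upwards [ae_restrict_mem (hsmeas true false)] with ω hω
      obtain ⟨h1, h2'⟩ := hω
      simp only [Set.mem_setOf_eq] at h1 h2'
      rw [h1, h2']
      simp [hφD, hWdef, bInd]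
    rw [integral_congr_ae hae, factor φD hφDm true false]
    rw [mul_comm (∫ ω, φD (W ω) ∂P), ← mul_assoc, inv_mul_cancel₀ (hposR true false).ne', one_mul]
    have e : (fun ω => φD (W ω)) = C'.indicator 1 := by
      funext ω
      by_cases h : Di true false ω = true <;>
        simp [hφD, hWdef, hC'def, Set.indicator, h]
    rw [e, integral_indicator_one mC', measureReal_def]
  -- numerator difference
  have hf10int : Integrable (fun ω => φ10 (W ω)) P := by
    have e : (fun ω => φ10 (W ω))
        = fun ω => C'.indicator (Y true false) ω + C'ᶜ.indicator (Y false false) ω := by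
      funext ω
      by_cases h : Di true false ω = true <;>
        simp [hφ10, hWdef, hC'def, Set.indicator, h]
    rw [e]
    exact (((hYint true false).indicator mC').add ((hYint false false).indicator mC'.compl))
  have hnum : (∫ ω, φ10 (W ω) ∂P) - ∫ ω, Y false false ω ∂P
      = ∫ ω in C', (Y true false ω - Y false false ω) ∂P := by
    rw [← integral_sub hf10int (hYint false false), ← integral_indicator mC']
    congr 1
    funext ω
    by_cases h : Di true false ω = true <;>
      simp [hφ10, hWdef, hC'def, Set.indicator, h]
  -- LHS : the complier set agrees a.e. with C'
  have hCeq : ({x | Di true false x = true ∧ Di false true x = false} : Set Ω) =ᵐ[P] C' := by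
    rw [Filter.eventuallyEq_set]
    filter_upwards [hosn] with ω h
    simp [hC'def, h.2.1]
  have hPC : P ({x | Di true false x = true ∧ Di false true x = false}) = P C' :=
    measure_congr hCeq
  have hPC'pos : (0:ℝ) < (P C').toReal := by
    rw [← hPC]; exact ENNReal.toReal_pos hC.ne' (htop _)
  have lhs : ∫ ω, (Y true false ω - Y false false ω)
        ∂(P[|{x | Di true false x = true ∧ Di false true x = false}])
      = (P C').toReal⁻¹ * ∫ ω in C', (Y true false ω - Y false false ω) ∂P := by
    rw [condint, hPC, Measure.restrict_congr_set hCeq]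
  rw [lhs, term1, term2, term3, hnum, inv_mul_eq_div]
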